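/- In two dimensions, let the multiplier m: ℝ² ∖ {0} → ℂ² be homogeneous of degree 0, smooth away from the origin, with m(−ξ) = conj(m(ξ)) and ξ·m(ξ) = 0 for ξ ≠ 0, and assume m is odd. Then m has the form m(ξ) = i ξ^⊥ |ξ|^{-1} ℓ(ξ), where ξ^⊥ = (−ξ₂, ξ₁) and ℓ is a scalar function which is real-valued, even, homogeneous of degree 0, and smooth on the unit circle. Consequently, the operator L = (−Δ)^{-1/2}(R₂T¹ − R₁T²) on 𝕋² is the Fourier multiplier with symbol L̂(ξ) = |ξ|^{-1} ℓ(ξ) (with L̂(0) = 0), and L is self-adjoint on L²(𝕋²). -/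

import Mathlib

open MeasureTheory Filter Topology

noncomputable section

/-- The unit cube in `ℝⁿ`, a fundamental domain for the torus `𝕋ⁿ = ℝⁿ/ℤⁿ`. -/
def cube (n : ℕ) : Set (Fin n → ℝ) := Set.univ.pi fun _ => Set.Ico (0 : ℝ) 1

/-- `ℤⁿ`-periodicity of a function on `ℝⁿ`, i.e. the function descends to `𝕋ⁿ`. -/
def ZPer {n : ℕ} {α : Type*} (f : (Fin n → ℝ) → α) : Prop :=
  ∀ (k : Fin n → ℤ) (x : Fin n → ℝ), f (x + fun i => (k i : ℝ)) = f x

/-- Fourier coefficient of a periodic function, w.r.t. the character `e^{2πi k·x}`. -/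
def fcoeff {n : ℕ} (f : (Fin n → ℝ) → ℂ) (k : Fin n → ℤ) : ℂ :=
  ∫ x in cube n, f x * Complex.exp (-(2 * Real.pi * Complex.I * ∑ i, (k i : ℝ) * x i))

/-- `u = T[θ]` where `T` is the Fourier multiplier operator with symbol `m`
(`m` acts on nonzero frequencies; the zero mode of `u` vanishes). -/
def IsDrift {n : ℕ} (m : (Fin n → ℝ) → Fin n → ℂ)
    (θ : (Fin n → ℝ) → ℝ) (u : (Fin n → ℝ) → Fin n → ℝ) : Prop :=
  ∀ (l : Fin n) (k : Fin n → ℤ),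
    fcoeff (fun x => (u x l : ℂ)) k =
      (if k = 0 then 0 else m (fun i => (k i : ℝ)) l) * fcoeff (fun x => (θ x : ℂ)) k

/-- Standing hypotheses on the symbol `m` of the constitutive operator `T`. -/
structure GoodSymbol (n : ℕ) (m : (Fin n → ℝ) → Fin n → ℂ) : Prop where
  homog : ∀ (c : ℝ) (ξ : Fin n → ℝ), 0 < c → ξ ≠ 0 → m (c • ξ) = m ξ
  conj_symm : ∀ ξ : Fin n → ℝ, ξ ≠ 0 → m (-ξ) = star (m ξ)
  div_free : ∀ ξ : Fin n → ℝ, ξ ≠ 0 → (∑ l, (ξ l : ℂ) * m ξ l) = 0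
  smooth : ContDiffOn ℝ (⊤ : ℕ∞) m {ξ | ξ ≠ 0}

/-- The multiplier is odd. -/
def OddSymbol {n : ℕ} (m : (Fin n → ℝ) → Fin n → ℂ) : Prop :=
  ∀ ξ : Fin n → ℝ, ξ ≠ 0 → m (-ξ) = -m ξ

/-- Weak solution of the active scalar equation on `I × 𝕋ⁿ`:
periodicity, the constitutive law `u = T[θ]` (for a.e. time in `I`), and the
distributional form of `∂ₜθ + div(θu) = 0` against smooth periodic test functions
compactly supported in time inside `I`. -/
def WeakSolutionOn {n : ℕ} (I : Set ℝ) (m : (Fin n → ℝ) → Fin n → ℂ)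
    (θ : ℝ → (Fin n → ℝ) → ℝ) (u : ℝ → (Fin n → ℝ) → Fin n → ℝ) : Prop :=
  (∀ t, ZPer (θ t)) ∧ (∀ t, ZPer (u t)) ∧
  (∀ᵐ t ∂(volume.restrict I), IsDrift m (θ t) (u t)) ∧
  ∀ φ : ℝ × (Fin n → ℝ) → ℝ, ContDiff ℝ (⊤ : ℕ∞) φ →
    (∀ (t : ℝ) (k : Fin n → ℤ) (x : Fin n → ℝ), φ (t, x + fun i => (k i : ℝ)) = φ (t, x)) →
    (∃ a b : ℝ, Set.Icc a b ⊆ I ∧ ∀ t x, t ∉ Set.Icc a b → φ (t, x) = 0) →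
    (∫ t : ℝ, ∫ x in cube n,
        (θ t x * fderiv ℝ φ (t, x) (1, 0)
          + θ t x * ∑ l, u t x l * fderiv ℝ φ (t, x) (0, Pi.single l 1))) = 0

/-- Global weak solution (on all of `ℝ × 𝕋ⁿ`). -/
def GlobalWeakSolution {n : ℕ} (m : (Fin n → ℝ) → Fin n → ℂ)
    (θ : ℝ → (Fin n → ℝ) → ℝ) (u : ℝ → (Fin n → ℝ) → Fin n → ℝ) : Prop :=
  WeakSolutionOn Set.univ m θ u

/-- Jointly Hölder continuous of exponent `α` in time and space. -/
def HolderCts {n : ℕ} (α : ℝ) (f : ℝ → (Fin n → ℝ) → ℝ) : Prop :=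
  ∃ C : ℝ, ∀ (t s : ℝ) (x y : Fin n → ℝ), |f t x - f s y| ≤ C * dist (t, x) (s, y) ^ α

/-- vanishing outside `I × 𝕋ⁿ`. -/
def SuppInTime {n : ℕ} {α : Type*} [Zero α] (I : Set ℝ) (f : ℝ → (Fin n → ℝ) → α) : Prop :=
  ∀ t ∉ I, ∀ x, f t x = 0

/-- compact time-support inside `I`. -/
def CptSuppInTime {n : ℕ} {α : Type*} [Zero α] (I : Set ℝ) (f : ℝ → (Fin n → ℝ) → α) : Prop :=
  ∃ a b : ℝ, Set.Icc a b ⊆ I ∧ ∀ t ∉ Set.Icc a b, ∀ x, f t x = 0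

/-- the Euclidean norm on `ℝ²`. -/
def enorm2 (ξ : Fin 2 → ℝ) : ℝ := Real.sqrt (ξ 0 ^ 2 + ξ 1 ^ 2)

/-- The symbol of `L = (-Δ)^{-1/2}(R₂T¹ - R₁T²)` on the integer frequency lattice
(with the character `e^{2πik·x}`; by degree-0 homogeneity `m(2πk) = m(k)`). -/
def Lsym (m : (Fin 2 → ℝ) → Fin 2 → ℂ) (k : Fin 2 → ℤ) : ℂ :=
  if k = 0 then 0 else
    (Complex.I * (k 1 : ℝ) * m (fun i => (k i : ℝ)) 0
        - Complex.I * (k 0 : ℝ) * m (fun i => (k i : ℝ)) 1) /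
      (2 * Real.pi * (((k 0 : ℝ)) ^ 2 + ((k 1 : ℝ)) ^ 2))

/-- `g = L f` in the Fourier multiplier sense. -/
def IsLOf (m : (Fin 2 → ℝ) → Fin 2 → ℂ) (f g : (Fin 2 → ℝ) → ℝ) : Prop :=
  ∀ k : Fin 2 → ℤ,
    fcoeff (fun x => (g x : ℂ)) k = Lsym m k * fcoeff (fun x => (f x : ℂ)) k


section Part1
variable {m : (Fin 2 → ℝ) → Fin 2 → ℂ}

lemma compNeZero2 {ξ : Fin 2 → ℝ} (h : ξ ≠ 0) : ξ 0 ≠ 0 ∨ ξ 1 ≠ 0 := by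
  by_contra hc
  push_neg at hc
  exact h (funext fun i => by fin_cases i <;> simp [hc.1, hc.2])

lemma sumsq_pos {ξ : Fin 2 → ℝ} (h : ξ ≠ 0) : 0 < ξ 0 ^ 2 + ξ 1 ^ 2 := by
  rcases compNeZero2 h with h | h
  · have h0 : 0 < ξ 0 ^ 2 := lt_of_le_of_ne (sq_nonneg _) (Ne.symm (pow_ne_zero 2 h))
    nlinarith [sq_nonneg (ξ 1)]
  · have h0 : 0 < ξ 1 ^ 2 := lt_of_le_of_ne (sq_nonneg _) (Ne.symm (pow_ne_zero 2 h))
    nlinarith [sq_nonneg (ξ 0)]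

lemma enorm2_pos {ξ : Fin 2 → ℝ} (h : ξ ≠ 0) : 0 < enorm2 ξ :=
  Real.sqrt_pos.mpr (sumsq_pos h)

lemma enorm2_sq {ξ : Fin 2 → ℝ} : enorm2 ξ ^ 2 = ξ 0 ^ 2 + ξ 1 ^ 2 :=
  Real.sq_sqrt (by positivity)

/-- the symbol is purely imaginary -/
lemma m_im (hm : GoodSymbol 2 m) (hodd : OddSymbol m) {ξ : Fin 2 → ℝ} (h : ξ ≠ 0) (l : Fin 2) :
    m ξ l = ((m ξ l).im : ℂ) * Complex.I := by
  have h1 : star (m ξ) = -m ξ := by rw [← hm.conj_symm ξ h, hodd ξ h]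
  have h2 : (starRingEnd ℂ) (m ξ l) = -(m ξ l) := congrFun h1 l
  have h3 : (m ξ l).re = 0 := by
    have := congrArg Complex.re h2
    simp only [Complex.conj_re, Complex.neg_re] at this
    linarith
  apply Complex.ext <;> simp [h3]

lemma div_free_real (hm : GoodSymbol 2 m) {ξ : Fin 2 → ℝ} (h : ξ ≠ 0) :
    ξ 0 * (m ξ 0).im + ξ 1 * (m ξ 1).im = 0 := by
  have := congrArg Complex.im (hm.div_free ξ h)
  simpa [Fin.sum_univ_two, Complex.add_im, Complex.mul_im] using this


def ell (m : (Fin 2 → ℝ) → Fin 2 → ℂ) (ξ : Fin 2 → ℝ) : ℝ :=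
  (-(ξ 1) * (m ξ 0).im + ξ 0 * (m ξ 1).im) / enorm2 ξ

lemma neg_app (ξ : Fin 2 → ℝ) (i : Fin 2) : (-ξ) i = -(ξ i) := rfl

lemma enorm2_neg (ξ : Fin 2 → ℝ) : enorm2 (-ξ) = enorm2 ξ := by
  simp [enorm2, neg_app]

lemma ell_even (hodd : OddSymbol m) {ξ : Fin 2 → ℝ} (h : ξ ≠ 0) : ell m (-ξ) = ell m ξ := by
  rw [ell, ell, hodd ξ h, enorm2_neg]
  simp [neg_app]

lemma enorm2_smul {c : ℝ} (hc : 0 < c) (ξ : Fin 2 → ℝ) : enorm2 (c • ξ) = c * enorm2 ξ := by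
  simp only [enorm2, Pi.smul_apply, smul_eq_mul, mul_pow]
  rw [← mul_add, Real.sqrt_mul (by positivity), Real.sqrt_sq hc.le]

lemma ell_homog (hm : GoodSymbol 2 m) {c : ℝ} {ξ : Fin 2 → ℝ} (hc : 0 < c) (h : ξ ≠ 0) :
    ell m (c • ξ) = ell m ξ := by
  rw [ell, ell, hm.homog c ξ hc h, enorm2_smul hc]
  rw [Pi.smul_apply, Pi.smul_apply, smul_eq_mul, smul_eq_mul]
  field_simp [(enorm2_pos h).ne']

lemma m_eq (hm : GoodSymbol 2 m) (hodd : OddSymbol m) {ξ : Fin 2 → ℝ} (h : ξ ≠ 0) :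
    m ξ 0 = Complex.I * ((-(ξ 1) * ell m ξ / enorm2 ξ : ℝ) : ℂ) ∧
    m ξ 1 = Complex.I * ((ξ 0 * ell m ξ / enorm2 ξ : ℝ) : ℂ) := by
  have hN := enorm2_pos h
  have hdf := div_free_real hm h
  have hsq : enorm2 ξ * enorm2 ξ = ξ 0 ^ 2 + ξ 1 ^ 2 := by
    rw [← pow_two]; exact enorm2_sq
  constructor
  · rw [m_im hm hodd h 0]
    have : -(ξ 1) * ell m ξ / enorm2 ξ = (m ξ 0).im := by
      rw [ell]
      field_simp
      rw [enorm2_sq]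
      linear_combination (-(ξ 0)) * hdf
    rw [this]; ring
  · rw [m_im hm hodd h 1]
    have : ξ 0 * ell m ξ / enorm2 ξ = (m ξ 1).im := by
      rw [ell]
      field_simp
      rw [enorm2_sq]
      linear_combination (-(ξ 1)) * hdf
    rw [this]; ring

lemma Lsym_formula (hm : GoodSymbol 2 m) (hodd : OddSymbol m) {ξ : Fin 2 → ℝ} (h : ξ ≠ 0) :
    (Complex.I * (ξ 1) * m ξ 0 - Complex.I * (ξ 0) * m ξ 1) / (((enorm2 ξ) ^ 2 : ℝ) : ℂ)
      = ((ell m ξ / enorm2 ξ : ℝ) : ℂ) := by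
  have hN := enorm2_pos h
  obtain ⟨h0, h1⟩ := m_eq hm hodd h
  rw [h0, h1]
  have hnum : Complex.I * (ξ 1) * (Complex.I * ((-(ξ 1) * ell m ξ / enorm2 ξ : ℝ) : ℂ))
      - Complex.I * (ξ 0) * (Complex.I * ((ξ 0 * ell m ξ / enorm2 ξ : ℝ) : ℂ))
      = (((ξ 0 ^ 2 + ξ 1 ^ 2) * ell m ξ / enorm2 ξ : ℝ) : ℂ) := by
    push_cast
    have : Complex.I * Complex.I = -1 := Complex.I_mul_I
    field_simp
    ring_nf
    rw [Complex.I_sq]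
    ring
  rw [hnum, ← enorm2_sq]
  have hNC : ((enorm2 ξ : ℝ) : ℂ) ≠ 0 := by exact_mod_cast hN.ne'
  push_cast
  field_simp

lemma ell_smooth (hm : GoodSymbol 2 m) : ContDiffOn ℝ (⊤ : ℕ∞) (ell m) {ξ | ξ ≠ 0} := by
  have hproj0 : ContDiff ℝ (⊤ : ℕ∞) (fun ξ : Fin 2 → ℝ => ξ 0) :=
    (ContinuousLinearMap.proj (R := ℝ) (φ := fun _ : Fin 2 => ℝ) 0).contDiff
  have hproj1 : ContDiff ℝ (⊤ : ℕ∞) (fun ξ : Fin 2 → ℝ => ξ 1) :=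
    (ContinuousLinearMap.proj (R := ℝ) (φ := fun _ : Fin 2 => ℝ) 1).contDiff
  have hm0 : ContDiffOn ℝ (⊤ : ℕ∞) (fun ξ => (m ξ 0).im) {ξ | ξ ≠ 0} :=
    Complex.imCLM.contDiff.comp_contDiffOn
      ((ContinuousLinearMap.proj (R := ℝ) (φ := fun _ : Fin 2 => ℂ) 0).contDiff.comp_contDiffOn
        hm.smooth)
  have hm1 : ContDiffOn ℝ (⊤ : ℕ∞) (fun ξ => (m ξ 1).im) {ξ | ξ ≠ 0} :=
    Complex.imCLM.contDiff.comp_contDiffOn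
      ((ContinuousLinearMap.proj (R := ℝ) (φ := fun _ : Fin 2 => ℂ) 1).contDiff.comp_contDiffOn
        hm.smooth)
  have hnorm : ContDiffOn ℝ (⊤ : ℕ∞) enorm2 {ξ | ξ ≠ 0} := by
    apply ContDiffOn.sqrt
    · exact ((hproj0.pow 2).add (hproj1.pow 2)).contDiffOn
    · intro ξ hξ
      exact (sumsq_pos hξ).ne'
  apply ContDiffOn.div
  · exact (((hproj1.neg.contDiffOn).mul hm0).add ((hproj0.contDiffOn).mul hm1))
  · exact hnorm
  · intro ξ hξ; exact (enorm2_pos hξ).ne'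
end Part1

section Part2
open Complex ContinuousMap Submodule Algebra Set AddCircle
open scoped ENNReal

local notation "conj'" => starRingEnd ℂ

/-- reality of Fourier coefficients of a real function -/
lemma fcoeff_conj (h : (Fin 2 → ℝ) → ℝ) (k : Fin 2 → ℤ) :
    fcoeff (fun x => ((h x : ℝ) : ℂ)) (-k) = conj' (fcoeff (fun x => ((h x : ℝ) : ℂ)) k) := by
  unfold fcoeff
  rw [← integral_conj]
  refine integral_congr_ae (Filter.Eventually.of_forall fun x => ?_)
  dsimp only
  rw [map_mul, Complex.conj_ofReal, ← Complex.exp_conj]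
  congr 1
  have hs : (∑ i, (((-k) i : ℤ) : ℝ) * x i) = -∑ i, ((k i : ℝ) * x i) := by
    rw [← Finset.sum_neg_distrib]
    refine Finset.sum_congr rfl fun i _ => ?_
    simp [Pi.neg_apply]
  rw [hs]
  simp only [map_neg, map_mul, map_ofNat, Complex.conj_I, Complex.conj_ofReal, Complex.ofReal_neg]
  ring

lemma Lsym_neg {m : (Fin 2 → ℝ) → Fin 2 → ℂ} (hodd : OddSymbol m) (k : Fin 2 → ℤ) :
    Lsym m (-k) = Lsym m k := by
  rcases eq_or_ne k 0 with rfl | hk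
  · simp [Lsym]
  · have hk' : (-k) ≠ 0 := fun hc => hk (by simpa using congrArg Neg.neg hc)
    have hξ : (fun i => ((k i : ℝ))) ≠ (0 : Fin 2 → ℝ) := by
      intro hc
      apply hk
      funext i
      have h2 : ((k i : ℝ)) = 0 := by simpa using congrFun hc i
      exact_mod_cast h2
    have hfun : (fun i => (((-k) i : ℤ) : ℝ)) = -(fun i => ((k i : ℝ))) := by
      funext i
      simp
    rw [Lsym, Lsym, if_neg hk', if_neg hk, hfun, hodd _ hξ]
    simp only [Pi.neg_apply, Int.cast_neg, Complex.ofReal_neg]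
    push_cast
    ring_nf


abbrev T2 := AddCircle (1 : ℝ) × AddCircle (1 : ℝ)

instance factOneLtZero : Fact ((0:ℝ) < 1) := ⟨one_pos⟩

instance : IsFiniteMeasure (volume : Measure (AddCircle (1:ℝ))) := by
  constructor
  rw [AddCircle.volume_eq_smul_haarAddCircle]
  simp

instance : IsFiniteMeasure (volume : Measure T2) := by
  rw [Measure.volume_eq_prod]; infer_instance

lemma haar_one : (haarAddCircle : Measure (AddCircle (1:ℝ))) = volume := by
  rw [AddCircle.volume_eq_smul_haarAddCircle]
  simp

/-- the 2D characters -/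
def efn (k : Fin 2 → ℤ) : C(T2, ℂ) :=
  ((fourier (k 0)).comp ⟨Prod.fst, continuous_fst⟩) *
    ((fourier (k 1)).comp ⟨Prod.snd, continuous_snd⟩)

lemma efn_apply (k : Fin 2 → ℤ) (z : T2) : efn k z = fourier (k 0) z.1 * fourier (k 1) z.2 := rfl

lemma efn_zero : efn 0 = 1 := by
  ext z
  simp [efn_apply, fourier_zero]

lemma efn_add (j k : Fin 2 → ℤ) : efn (j + k) = efn j * efn k := by
  ext z
  simp only [efn_apply, Pi.add_apply, fourier_add, ContinuousMap.mul_apply]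
  ring

lemma efn_star (k : Fin 2 → ℤ) : star (efn k) = efn (-k) := by
  ext z
  simp only [ContinuousMap.star_apply, efn_apply, star_mul', Pi.neg_apply, fourier_neg]
  rfl

/-- 1D integral of a character -/
lemma fourier_integral_one (n : ℤ) :
    (∫ z : AddCircle (1:ℝ), fourier n z) = if n = 0 then 1 else 0 := by
  have hmp := AddCircle.measurePreserving_mk (T := 1) 0
  rw [zero_add] at hmp
  have hcont : Continuous ((↑) : ℝ → AddCircle (1:ℝ)) :=
    QuotientAddGroup.isOpenQuotientMap_mk.continuous
  rw [← hmp.map_eq, integral_map hcont.aemeasurable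
    ((map_continuous (fourier n)).aestronglyMeasurable)]
  have hint : ∀ x ∈ Ioc (0:ℝ) 1, fourier n ((x : ℝ) : AddCircle (1:ℝ))
      = Complex.exp ((2 * Real.pi * Complex.I * n) * x) := by
    intro x _
    rw [fourier_coe_apply]
    norm_num
  rw [setIntegral_congr_fun measurableSet_Ioc hint]
  rcases eq_or_ne n 0 with rfl | hn
  · simp only [Int.cast_zero, mul_zero, zero_mul, Complex.exp_zero, if_pos rfl]
    simp [Real.volume_Ioc]
  · rw [if_neg hn, ← intervalIntegral.integral_of_le zero_le_one]
    have hc : (2 * Real.pi * Complex.I * n) ≠ 0 := by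
      simp [Real.pi_ne_zero, Complex.I_ne_zero, hn, Complex.ext_iff]
    rw [integral_exp_mul_complex hc]
    have h1 : (2 * Real.pi * Complex.I * n * ((1:ℝ):ℂ)) = n * (2 * Real.pi * Complex.I) := by
      push_cast; ring
    have h0 : (2 * Real.pi * Complex.I * n * ((0:ℝ):ℂ)) = 0 := by push_cast; ring
    rw [h1, h0, Complex.exp_int_mul_two_pi_mul_I, Complex.exp_zero]
    simp

lemma fourier_pair (a b : ℤ) :
    (∫ z : AddCircle (1:ℝ), conj' (fourier a z) * fourier b z) = if a = b then 1 else 0 := by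
  have h : ∀ z : AddCircle (1:ℝ), conj' (fourier a z) * fourier b z = fourier (-a + b) z := by
    intro z
    rw [fourier_add, fourier_neg]
  rw [integral_congr_ae (Filter.Eventually.of_forall h), fourier_integral_one]
  congr 1
  simp [neg_add_eq_zero, eq_comm]

/-- L² elements of the characters -/
def eLp (k : Fin 2 → ℤ) : Lp ℂ 2 (volume : Measure T2) :=
  ContinuousMap.toLp (E := ℂ) 2 volume ℂ (efn k)

lemma orthonormal_eLp : Orthonormal ℂ eLp := by
  rw [orthonormal_iff_ite]
  intro j k
  rw [eLp, eLp, ContinuousMap.inner_toLp]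
  have h : ∀ z : T2, conj' (efn j z) * efn k z =
      (fun a => conj' (fourier (j 0) a) * fourier (k 0) a) z.1 *
      (fun a => conj' (fourier (j 1) a) * fourier (k 1) a) z.2 := by
    intro z
    simp only [efn_apply, map_mul]
    ring
  have hcalc : (∫ z : T2, conj' (efn j z) * efn k z)
      = (if j 0 = k 0 then 1 else 0) * (if j 1 = k 1 then 1 else 0) := by
    calc (∫ z : T2, conj' (efn j z) * efn k z)
        = ∫ z, (fun a => conj' (fourier (j 0) a) * fourier (k 0) a) z.1 *
            (fun a => conj' (fourier (j 1) a) * fourier (k 1) a) z.2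
            ∂((volume : Measure (AddCircle (1:ℝ))).prod (volume : Measure (AddCircle (1:ℝ)))) := by
          rw [← Measure.volume_eq_prod]
          exact integral_congr_ae (Filter.Eventually.of_forall h)
      _ = (∫ a : AddCircle (1:ℝ), conj' (fourier (j 0) a) * fourier (k 0) a) *
          (∫ a : AddCircle (1:ℝ), conj' (fourier (j 1) a) * fourier (k 1) a) :=
          integral_prod_mul (μ := (volume : Measure (AddCircle (1:ℝ))))
            (ν := (volume : Measure (AddCircle (1:ℝ))))
            (fun a => conj' (fourier (j 0) a) * fourier (k 0) a)
            (fun a => conj' (fourier (j 1) a) * fourier (k 1) a)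
      _ = _ := by rw [fourier_pair, fourier_pair]
  rw [show (∫ x : T2, efn k x * conj' (efn j x)) = ∫ z : T2, conj' (efn j z) * efn k z from
    integral_congr_ae (Filter.Eventually.of_forall fun z => mul_comm _ _), hcalc]
  have hjk : j = k ↔ (j 0 = k 0 ∧ j 1 = k 1) := by
    constructor
    · rintro rfl; exact ⟨rfl, rfl⟩
    · rintro ⟨h0, h1⟩; funext i; fin_cases i <;> assumption
  by_cases hj : j = k
  · rw [if_pos hj, if_pos (hjk.mp hj).1, if_pos (hjk.mp hj).2, one_mul]
  · rw [if_neg hj]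
    rcases (not_and_or.mp (fun hc => hj (hjk.mpr hc))) with h' | h'
    · rw [if_neg h', zero_mul]
    · rw [if_neg h', mul_zero]

/-- star subalgebra generated by characters -/
def efnAlg : StarSubalgebra ℂ C(T2, ℂ) where
  toSubalgebra := Algebra.adjoin ℂ (Set.range efn)
  star_mem' := by
    show Algebra.adjoin ℂ (Set.range efn) ≤ star (Algebra.adjoin ℂ (Set.range efn))
    refine adjoin_le ?_
    rintro - ⟨n, rfl⟩
    rw [SetLike.mem_coe, Subalgebra.mem_star_iff]
    exact subset_adjoin ⟨-n, (efn_star n).symm⟩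

theorem efnAlg_coe :
    Subalgebra.toSubmodule efnAlg.toSubalgebra = span ℂ (Set.range efn) := by
  apply adjoin_eq_span_of_subset
  refine Subset.trans ?_ Submodule.subset_span
  intro x hx
  refine Submonoid.closure_induction (fun _ => id) ⟨0, efn_zero⟩ ?_ hx
  rintro - - - - ⟨a, rfl⟩ ⟨b, rfl⟩
  exact ⟨a + b, (efn_add a b)⟩

theorem efnAlg_separatesPoints : efnAlg.SeparatesPoints := by
  intro x y hxy
  rcases Prod.ext_iff.not.mp hxy |> not_and_or.mp with h | h
  · refine ⟨_, ⟨efn ![1, 0], subset_adjoin ⟨![1, 0], rfl⟩, rfl⟩, ?_⟩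
    simp only [efn_apply, Matrix.cons_val_zero, Matrix.cons_val_one, Matrix.head_cons,
      fourier_one, fourier_zero, mul_one]
    intro hc
    exact h (injective_toCircle one_ne_zero (Subtype.coe_inj.mp hc))
  · refine ⟨_, ⟨efn ![0, 1], subset_adjoin ⟨![0, 1], rfl⟩, rfl⟩, ?_⟩
    simp only [efn_apply, Matrix.cons_val_zero, Matrix.cons_val_one, Matrix.head_cons,
      fourier_one, fourier_zero, one_mul]
    intro hc
    exact h (injective_toCircle one_ne_zero (Subtype.coe_inj.mp hc))

theorem span_efn_top : (span ℂ (Set.range efn)).topologicalClosure = ⊤ := by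
  rw [← efnAlg_coe]
  exact congr_arg (Subalgebra.toSubmodule <| StarSubalgebra.toSubalgebra ·)
    (ContinuousMap.starSubalgebra_topologicalClosure_eq_top_of_separatesPoints efnAlg
      efnAlg_separatesPoints)

theorem span_eLp_top : (span ℂ (Set.range eLp)).topologicalClosure = ⊤ := by
  convert
    (ContinuousMap.toLp_denseRange (p := (2 : ℝ≥0∞)) ℂ (volume : Measure T2) ℂ
      (by norm_num)).topologicalClosure_map_submodule span_efn_top
  · rfl
  erw [map_span, Set.range_comp]
  simp only [ContinuousLinearMap.coe_coe]

def eBasis : HilbertBasis (Fin 2 → ℤ) ℂ (Lp ℂ 2 (volume : Measure T2)) :=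
  HilbertBasis.mk orthonormal_eLp (by rw [span_eLp_top])

lemma eBasis_apply (k : Fin 2 → ℤ) : eBasis k = eLp k := congrFun (HilbertBasis.coe_mk _ _) k

/-- Parseval for continuous functions on the torus -/
theorem parseval_cts (F G : C(T2, ℂ)) :
    (∫ z, conj' (F z) * G z ∂(volume : Measure T2)) =
      ∑' k : Fin 2 → ℤ,
        conj' (∫ z, conj' (efn k z) * F z ∂(volume : Measure T2)) *
          (∫ z, conj' (efn k z) * G z ∂(volume : Measure T2)) := by
  have h := eBasis.tsum_inner_mul_inner (ContinuousMap.toLp (E := ℂ) 2 volume ℂ F)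
    (ContinuousMap.toLp (E := ℂ) 2 volume ℂ G)
  rw [ContinuousMap.inner_toLp] at h
  rw [integral_congr_ae (Filter.Eventually.of_forall fun z => mul_comm (conj' (F z)) (G z)), ← h]
  refine tsum_congr fun k => ?_
  rw [eBasis_apply]
  have h1 : (inner ℂ (ContinuousMap.toLp (E := ℂ) 2 volume ℂ F) (eLp k) : ℂ)
      = conj' (∫ z, conj' (efn k z) * F z ∂(volume : Measure T2)) := by
    rw [← inner_conj_symm, eLp, ContinuousMap.inner_toLp,
      integral_congr_ae (Filter.Eventually.of_forall fun z => mul_comm (F z) (conj' (efn k z)))]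
  have h2 : (inner ℂ (eLp k) (ContinuousMap.toLp (E := ℂ) 2 volume ℂ G) : ℂ)
      = ∫ z, conj' (efn k z) * G z ∂(volume : Measure T2) := by
    rw [eLp, ContinuousMap.inner_toLp,
      integral_congr_ae (Filter.Eventually.of_forall fun z => mul_comm (G z) (conj' (efn k z)))]
  rw [h1, h2]

/-- canonical representative in `[0,1)` -/
def rp (a : AddCircle (1:ℝ)) : ℝ := (AddCircle.equivIco 1 0 a : ℝ)

lemma rp_coe (a : AddCircle (1:ℝ)) : ((rp a : ℝ) : AddCircle (1:ℝ)) = a := by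
  induction a using QuotientAddGroup.induction_on with
  | H x =>
    rw [rp, AddCircle.coe_equivIco_mk_apply, div_one, mul_one]
    rw [QuotientAddGroup.eq_iff_sub_mem]
    refine AddSubgroup.mem_zmultiples_iff.mpr ⟨-⌊x⌋, ?_⟩
    rw [Int.fract, zsmul_eq_mul, mul_one]
    push_cast
    ring

lemma rp_sub_int (x : ℝ) : ∃ n : ℤ, rp ((x : ℝ) : AddCircle (1:ℝ)) = x + n := by
  have h := rp_coe ((x : ℝ) : AddCircle (1:ℝ))
  rw [QuotientAddGroup.eq_iff_sub_mem] at h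
  obtain ⟨n, hn⟩ := AddSubgroup.mem_zmultiples_iff.mp h
  refine ⟨n, ?_⟩
  have : (n : ℝ) = rp ((x : ℝ) : AddCircle (1:ℝ)) - x := by
    rw [← hn, zsmul_eq_mul, mul_one]
  linarith [this]

/-- descend a periodic function to the torus -/
def desc (F : (Fin 2 → ℝ) → ℂ) : T2 → ℂ := fun z => F ![rp z.1, rp z.2]

lemma vec_eq (x : Fin 2 → ℝ) : ![x 0, x 1] = x := by
  funext i; fin_cases i <;> rfl

lemma desc_coe {F : (Fin 2 → ℝ) → ℂ} (hF : ZPer F) (a b : ℝ) :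
    desc F (↑a, ↑b) = F ![a, b] := by
  obtain ⟨n0, h0⟩ := rp_sub_int a
  obtain ⟨n1, h1⟩ := rp_sub_int b
  have hv : (![rp ↑a, rp ↑b] : Fin 2 → ℝ)
      = ![a, b] + fun i => ((![n0, n1] : Fin 2 → ℤ) i : ℝ) := by
    funext i
    fin_cases i <;> simp [h0, h1]
  rw [desc]
  dsimp only
  rw [hv, hF]

lemma continuous_desc {F : (Fin 2 → ℝ) → ℂ} (hFc : Continuous F) (hF : ZPer F) :
    Continuous (desc F) := by
  have hq : IsOpenQuotientMap
      (Prod.map ((↑) : ℝ → AddCircle (1:ℝ)) ((↑) : ℝ → AddCircle (1:ℝ))) :=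
    QuotientAddGroup.isOpenQuotientMap_mk.prodMap QuotientAddGroup.isOpenQuotientMap_mk
  rw [← hq.continuous_comp_iff]
  have hcomp : (desc F) ∘
      (Prod.map ((↑) : ℝ → AddCircle (1:ℝ)) ((↑) : ℝ → AddCircle (1:ℝ)))
      = fun p : ℝ × ℝ => F ![p.1, p.2] := funext fun p => desc_coe hF p.1 p.2
  rw [hcomp]
  apply hFc.comp
  apply continuous_pi
  intro i
  fin_cases i
  · exact continuous_fst
  · exact continuous_snd

lemma integral_desc {F : (Fin 2 → ℝ) → ℂ} (hFc : Continuous F) (hF : ZPer F) :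
    ∫ z, desc F z ∂(volume : Measure T2) = ∫ x in cube 2, F x := by
  have h0 : MeasurePreserving ((↑) : ℝ → AddCircle (1:ℝ))
      (volume.restrict (Ico (0:ℝ) 1)) volume := by
    have h := AddCircle.measurePreserving_mk (T := 1) 0
    rw [zero_add] at h
    rwa [Measure.restrict_congr_set Ico_ae_eq_Ioc]
  have hprod : MeasurePreserving
      (Prod.map ((↑) : ℝ → AddCircle (1:ℝ)) ((↑) : ℝ → AddCircle (1:ℝ)))
      ((volume.restrict (Ico (0:ℝ) 1)).prod (volume.restrict (Ico (0:ℝ) 1)))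
      (volume : Measure T2) := by
    rw [Measure.volume_eq_prod]
    exact h0.prod h0
  have hqc : Continuous
      (Prod.map ((↑) : ℝ → AddCircle (1:ℝ)) ((↑) : ℝ → AddCircle (1:ℝ))) :=
    (QuotientAddGroup.isOpenQuotientMap_mk.continuous).prodMap
      QuotientAddGroup.isOpenQuotientMap_mk.continuous
  have hmeas : AEStronglyMeasurable (desc F) (volume : Measure T2) :=
    (continuous_desc hFc hF).aestronglyMeasurable
  rw [← hprod.map_eq, integral_map hqc.measurable.aemeasurable
    (hprod.map_eq.symm ▸ hmeas)]
  have hint : ∀ p : ℝ × ℝ, desc F (Prod.map ((↑) : ℝ → AddCircle (1:ℝ))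
      ((↑) : ℝ → AddCircle (1:ℝ)) p) = F ![p.1, p.2] := fun p => desc_coe hF p.1 p.2
  rw [integral_congr_ae (Filter.Eventually.of_forall hint)]
  rw [Measure.prod_restrict, ← Measure.volume_eq_prod]
  -- now transfer via finTwoArrow
  have hvp := (MeasureTheory.volume_preserving_finTwoArrow ℝ)
  have hc : (MeasurableEquiv.finTwoArrow : (Fin 2 → ℝ) ≃ᵐ (ℝ × ℝ)) ⁻¹'
      ((Ico (0:ℝ) 1) ×ˢ (Ico (0:ℝ) 1)) = cube 2 := by
    ext x
    simp [cube, MeasurableEquiv.finTwoArrow, Fin.forall_fin_two]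
  have hre := hvp.restrict_preimage (s := (Ico (0:ℝ) 1) ×ˢ (Ico (0:ℝ) 1))
    (measurableSet_Ico.prod measurableSet_Ico)
  rw [hc] at hre
  rw [← hre.integral_comp (MeasurableEquiv.measurableEmbedding _)
    (fun p : ℝ × ℝ => F ![p.1, p.2])]
  refine integral_congr_ae (Filter.Eventually.of_forall fun x => ?_)
  show F ![(MeasurableEquiv.finTwoArrow x).1, (MeasurableEquiv.finTwoArrow x).2] = F x
  have : (MeasurableEquiv.finTwoArrow x : ℝ × ℝ) = (x 0, x 1) := rfl
  rw [this, vec_eq]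

/-- the exponential kernel as a function on ℝ² -/
def eker (k : Fin 2 → ℤ) : (Fin 2 → ℝ) → ℂ :=
  fun x => Complex.exp (-(2 * Real.pi * Complex.I * ∑ i, (k i : ℝ) * x i))

lemma eker_cont (k : Fin 2 → ℤ) : Continuous (eker k) := by
  apply Complex.continuous_exp.comp
  apply Continuous.neg
  apply Continuous.mul continuous_const
  apply Complex.continuous_ofReal.comp
  exact continuous_finset_sum _ fun i _ => continuous_const.mul (continuous_apply i)

lemma eker_per (k : Fin 2 → ℤ) : ZPer (eker k) := by
  intro n x
  unfold eker
  have hsum : (∑ i, (k i : ℝ) * (x + fun j => ((n j : ℤ) : ℝ)) i)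
      = (∑ i, (k i : ℝ) * x i) + ((∑ i, k i * n i : ℤ) : ℝ) := by
    push_cast
    rw [← Finset.sum_add_distrib]
    refine Finset.sum_congr rfl fun i _ => ?_
    rw [Pi.add_apply]
    ring
  rw [hsum]
  set N := (∑ i, k i * n i : ℤ) with hN
  rw [Complex.ofReal_add, mul_add, neg_add, Complex.exp_add]
  have hz : Complex.exp (-(2 * Real.pi * Complex.I * ((N : ℝ) : ℂ))) = 1 := by
    rw [show (-(2 * Real.pi * Complex.I * ((N : ℝ) : ℂ)))
        = (-N : ℤ) * (2 * Real.pi * Complex.I) by push_cast; ring]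
    exact Complex.exp_int_mul_two_pi_mul_I _
  rw [hz, mul_one]

lemma desc_eker (k : Fin 2 → ℤ) (z : T2) : desc (eker k) z = conj' (efn k z) := by
  unfold desc eker
  rw [efn_apply, map_mul]
  conv_rhs => rw [← rp_coe z.1, ← rp_coe z.2]
  rw [fourier_coe_apply, fourier_coe_apply]
  rw [← Complex.exp_conj, ← Complex.exp_conj, ← Complex.exp_add]
  congr 1
  simp only [map_div₀, map_mul, map_ofNat, Complex.conj_I, Complex.conj_ofReal, map_one,
    map_intCast]
  rw [Fin.sum_univ_two]
  have h0 : (![rp z.1, rp z.2] : Fin 2 → ℝ) 0 = rp z.1 := rfl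
  have h1 : (![rp z.1, rp z.2] : Fin 2 → ℝ) 1 = rp z.2 := rfl
  rw [h0, h1]
  push_cast
  ring

lemma fcoeff_eq {F : (Fin 2 → ℝ) → ℂ} (hFc : Continuous F) (hF : ZPer F) (k : Fin 2 → ℤ) :
    fcoeff F k = ∫ z, conj' (efn k z) * desc F z ∂(volume : Measure T2) := by
  have hc : Continuous (fun x => F x * eker k x) := hFc.mul (eker_cont k)
  have hp : ZPer (fun x => F x * eker k x) := fun n x => by
    dsimp only
    rw [hF n x, eker_per k n x]
  have h := integral_desc hc hp
  unfold eker at h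
  rw [fcoeff, ← h]
  refine integral_congr_ae (Filter.Eventually.of_forall fun z => ?_)
  have h2 : desc (fun x => F x * Complex.exp
      (-(2 * Real.pi * Complex.I * ∑ i, (k i : ℝ) * x i))) z
      = desc F z * desc (eker k) z := rfl
  rw [h2, desc_eker]
  dsimp only
  ring

theorem parseval_cube {F G : (Fin 2 → ℝ) → ℂ} (hFc : Continuous F) (hF : ZPer F)
    (hGc : Continuous G) (hG : ZPer G) :
    (∫ x in cube 2, conj' (F x) * G x)
      = ∑' k : Fin 2 → ℤ, conj' (fcoeff F k) * fcoeff G k := by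
  have hFd := continuous_desc hFc hF
  have hGd := continuous_desc hGc hG
  have h := parseval_cts ⟨desc F, hFd⟩ ⟨desc G, hGd⟩
  simp only [ContinuousMap.coe_mk] at h
  have hL : (∫ z, conj' (desc F z) * desc G z ∂(volume : Measure T2))
      = ∫ x in cube 2, conj' (F x) * G x := by
    have hc : Continuous (fun x => conj' (F x) * G x) :=
      (Complex.continuous_conj.comp hFc).mul hGc
    have hp : ZPer (fun x => conj' (F x) * G x) := fun n x => by
      dsimp only
      rw [hF n x, hG n x]
    rw [← integral_desc hc hp]
    rfl
  rw [← hL, h]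
  refine tsum_congr fun k => ?_
  rw [← fcoeff_eq hFc hF k, ← fcoeff_eq hGc hG k]

theorem selfadj {m : (Fin 2 → ℝ) → Fin 2 → ℂ} (hodd : OddSymbol m)
    (f g Lf Lg : (Fin 2 → ℝ) → ℝ)
    (hf : Continuous f) (hg : Continuous g) (hLf : Continuous Lf) (hLg : Continuous Lg)
    (hfp : ZPer f) (hgp : ZPer g) (hLfp : ZPer Lf) (hLgp : ZPer Lg)
    (hLff : IsLOf m f Lf) (hLgg : IsLOf m g Lg) :
    (∫ x in cube 2, f x * Lg x) = ∫ x in cube 2, Lf x * g x := by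
  suffices hmain : (∫ x in cube 2, ((f x * Lg x : ℝ) : ℂ))
      = ∫ x in cube 2, ((Lf x * g x : ℝ) : ℂ) by
    have h1 := integral_ofReal (𝕜 := ℂ) (μ := (volume.restrict (cube 2)))
      (f := fun x => f x * Lg x)
    have h2 := integral_ofReal (𝕜 := ℂ) (μ := (volume.restrict (cube 2)))
      (f := fun x => Lf x * g x)
    apply Complex.ofReal_injective
    exact h1.symm.trans (hmain.trans h2)
  have hfC : Continuous (fun x => ((f x : ℝ) : ℂ)) := Complex.continuous_ofReal.comp hf
  have hgC : Continuous (fun x => ((g x : ℝ) : ℂ)) := Complex.continuous_ofReal.comp hg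
  have hLfC : Continuous (fun x => ((Lf x : ℝ) : ℂ)) := Complex.continuous_ofReal.comp hLf
  have hLgC : Continuous (fun x => ((Lg x : ℝ) : ℂ)) := Complex.continuous_ofReal.comp hLg
  have hfP : ZPer (fun x => ((f x : ℝ) : ℂ)) := fun n x => by dsimp only; rw [hfp n x]
  have hgP : ZPer (fun x => ((g x : ℝ) : ℂ)) := fun n x => by dsimp only; rw [hgp n x]
  have hLfP : ZPer (fun x => ((Lf x : ℝ) : ℂ)) := fun n x => by dsimp only; rw [hLfp n x]
  have hLgP : ZPer (fun x => ((Lg x : ℝ) : ℂ)) := fun n x => by dsimp only; rw [hLgp n x]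
  have hLHS : (∫ x in cube 2, ((f x * Lg x : ℝ) : ℂ))
      = ∫ x in cube 2, conj' ((f x : ℂ)) * ((Lg x : ℂ)) := by
    refine integral_congr_ae (Filter.Eventually.of_forall fun x => ?_)
    dsimp only
    rw [Complex.conj_ofReal]
    push_cast
    ring
  have hRHS : (∫ x in cube 2, ((Lf x * g x : ℝ) : ℂ))
      = ∫ x in cube 2, conj' ((g x : ℂ)) * ((Lf x : ℂ)) := by
    refine integral_congr_ae (Filter.Eventually.of_forall fun x => ?_)
    dsimp only
    rw [Complex.conj_ofReal]
    push_cast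
    ring
  rw [hLHS, hRHS, parseval_cube hfC hfP hLgC hLgP, parseval_cube hgC hgP hLfC hLfP]
  have key : ∀ k : Fin 2 → ℤ,
      conj' (fcoeff (fun x => ((g x : ℝ) : ℂ)) (-k)) * fcoeff (fun x => ((Lf x : ℝ) : ℂ)) (-k)
        = conj' (fcoeff (fun x => ((f x : ℝ) : ℂ)) k) * fcoeff (fun x => ((Lg x : ℝ) : ℂ)) k := by
    intro k
    rw [hLff (-k), hLgg k, Lsym_neg hodd k, fcoeff_conj g k, fcoeff_conj f k,
      Complex.conj_conj]
    ring
  symm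
  calc ∑' k : Fin 2 → ℤ, conj' (fcoeff (fun x => ((g x : ℝ) : ℂ)) k)
        * fcoeff (fun x => ((Lf x : ℝ) : ℂ)) k
      = ∑' k : Fin 2 → ℤ, conj' (fcoeff (fun x => ((g x : ℝ) : ℂ)) (-k))
        * fcoeff (fun x => ((Lf x : ℝ) : ℂ)) (-k) := by
        refine (Equiv.tsum_eq (Equiv.neg (Fin 2 → ℤ)) _).symm.trans ?_
        refine tsum_congr fun k => ?_
        rw [Equiv.neg_apply]
    _ = ∑' k : Fin 2 → ℤ, conj' (fcoeff (fun x => ((f x : ℝ) : ℂ)) k)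
        * fcoeff (fun x => ((Lg x : ℝ) : ℂ)) k := tsum_congr key
  

end Part2

/-- an odd, degree-0 homogeneous, divergence-free multiplier in 2D has
the form `m(ξ) = i ξ^⊥ |ξ|⁻¹ ℓ(ξ)` with `ℓ` real, even, homogeneous of degree 0 and
smooth away from the origin; consequently the symbol of `L = (-Δ)^{-1/2}(R₂T¹ - R₁T²)`
is `|ξ|⁻¹ ℓ(ξ)`, and `L` is self-adjoint on `L²(𝕋²)`. -/
theorem odd_symbol_structure_and_L_selfadjoint
    (m : (Fin 2 → ℝ) → Fin 2 → ℂ) (hm : GoodSymbol 2 m) (hodd : OddSymbol m) :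
    (∃ ℓ : (Fin 2 → ℝ) → ℝ,
      (∀ ξ : Fin 2 → ℝ, ξ ≠ 0 → ℓ (-ξ) = ℓ ξ) ∧
      (∀ (c : ℝ) (ξ : Fin 2 → ℝ), 0 < c → ξ ≠ 0 → ℓ (c • ξ) = ℓ ξ) ∧
      ContDiffOn ℝ (⊤ : ℕ∞) ℓ {ξ | ξ ≠ 0} ∧
      (∀ ξ : Fin 2 → ℝ, ξ ≠ 0 →
        m ξ 0 = Complex.I * ((-(ξ 1) * ℓ ξ / enorm2 ξ : ℝ) : ℂ) ∧
        m ξ 1 = Complex.I * ((ξ 0 * ℓ ξ / enorm2 ξ : ℝ) : ℂ)) ∧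
      -- the symbol of L is |ξ|⁻¹ ℓ(ξ)
      (∀ ξ : Fin 2 → ℝ, ξ ≠ 0 →
        (Complex.I * (ξ 1) * m ξ 0 - Complex.I * (ξ 0) * m ξ 1) / (((enorm2 ξ) ^ 2 : ℝ) : ℂ)
          = ((ℓ ξ / enorm2 ξ : ℝ) : ℂ))) ∧
    -- L is self-adjoint on L²(𝕋²)
    (∀ f g Lf Lg : (Fin 2 → ℝ) → ℝ,
      Continuous f → Continuous g → Continuous Lf → Continuous Lg →
      ZPer f → ZPer g → ZPer Lf → ZPer Lg →
      IsLOf m f Lf → IsLOf m g Lg →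
      (∫ x in cube 2, f x * Lg x) = ∫ x in cube 2, Lf x * g x) := by
  constructor
  · exact ⟨ell m, fun ξ h => ell_even hodd h, fun c ξ hc h => ell_homog hm hc h,
      ell_smooth hm, fun ξ h => m_eq hm hodd h, fun ξ h => Lsym_formula hm hodd h⟩
  · intro f g Lf Lg hf hg hLf hLg hfp hgp hLfp hLgp h1 h2
    exact selfadj hodd f g Lf Lg hf hg hLf hLg hfp hgp hLfp hLgp h1 h2
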